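/- arXiv:2405.09088 — 2 statements merged into one kernel-verified Lean document; each statement's English description precedes it below -/
import Mathlib

section
/- Let X be a cyclic set of M⁺ with e ∈ X. Suppose (a) there exists a cyclic flat Z_X of M⁺ with Z_X ⊊ X and Δγ(Z_X) > 0, and (b) for all cyclic flats Z0, Z1 of M⁺ with Z0 ⊊ X, Z1 ⊊ X, Δγ(Z0) > 0 and Δγ(Z1) > 0, we have Z0 ∨ Z1 ⊊ X. Then Δγ(X) ≥ 0. Similarly, let W be a cyclic set of M⁺ with e ∈ W such that for all cyclic flats Z0, Z1 of M⁺ with Z0 ⊊ W, Z1 ⊊ W, Δγ(Z0) < 0 and Δγ(Z1) < 0, we have Z0 ∨ Z1 ⊊ W. Then Δγ(W) ≤ 0. -/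
open Set Matroid
open scoped Classical

namespace Paper

variable {α : Type*}

/-- A circuit of a matroid: a minimal dependent set. -/
def Circuit (M : Matroid α) (C : Set α) : Prop :=
  M.Dep C ∧ ∀ D ⊂ C, M.Indep D

/-- A coloop: an element of the ground set lying in no circuit. -/
def Coloop (M : Matroid α) (x : α) : Prop :=
  x ∈ M.E ∧ ∀ C, Circuit M C → x ∉ C

/-- The set of coloops of a matroid. -/
def coloops (M : Matroid α) : Set α := {x | Coloop M x}

/-- A cyclic set: a subset of the ground set each of whose elements lies in a
circuit contained in the set (equivalently, the restriction has no coloops). -/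
def Cyclic (M : Matroid α) (X : Set α) : Prop :=
  X ⊆ M.E ∧ ∀ x ∈ X, ∃ C, Circuit M C ∧ C ⊆ X ∧ x ∈ C

/-- A cyclic flat: a cyclic set that is also a flat. -/
def CyclicFlat (M : Matroid α) (X : Set α) : Prop :=
  Cyclic M X ∧ M.IsFlat X

/-- The rank of a set: the largest cardinality of an independent subset. -/
noncomputable def rk (M : Matroid α) (X : Set α) : ℕ :=
  sSup (Set.ncard '' {I | M.Indep I ∧ I ⊆ X})

/-- The nullity of a set: `n(X) = |X| − r(X)`. -/
noncomputable def nullity (M : Matroid α) (X : Set α) : ℤ :=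
  (X.ncard : ℤ) - rk M X

/-- Deletion of a single element: `M \ e`. -/
noncomputable def deleteElem (M : Matroid α) (e : α) : Matroid α :=
  M ↾ (M.E \ {e})

variable [Fintype α] [DecidableEq α]

/-- The `γ` function: `γ_M(X) = n(X) − Σ_{Z ∈ Z(M), Z ⊊ X} γ_M(Z)`. -/
noncomputable def gamma (M : Matroid α) (X : Finset α) : ℤ :=
  nullity M ↑X -
    ∑ Z ∈ (Finset.univ.filter (fun Z : Finset α => CyclicFlat M ↑Z ∧ Z ⊂ X)).attach,
      gamma M Z.1
termination_by X.card
decreasing_by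
  exact Finset.card_lt_card (Finset.mem_filter.mp Z.2).2.2

/-- `Δγ(X) = γ_M(X − e) − γ_{M⁺}(X)` where `M = M⁺ \ e`. -/
noncomputable def dgamma (M : Matroid α) (e : α) (X : Finset α) : ℤ :=
  gamma (deleteElem M e) (X.erase e) - gamma M X

set_option linter.unusedSectionVars false

section AuxBasic

variable {N : Matroid α}

lemma flat_of_closure_eq {S : Set α} (hS : N.closure S = S) : N.IsFlat S := by
  constructor
  · intro I X hIS hIX
    exact hIX.subset_closure.trans ((N.closure_subset_closure hIS.subset).trans hS.subset)
  · rw [← hS]; exact N.closure_subset_ground _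

lemma flat_closure (N : Matroid α) (X : Set α) : N.IsFlat (N.closure X) :=
  flat_of_closure_eq (N.closure_closure X)

lemma flat_iff_closure_eq {S : Set α} : N.IsFlat S ↔ N.closure S = S :=
  ⟨fun h => h.closure, fun h => flat_of_closure_eq h⟩

/-- `rk` equals the cardinality of any basis. -/
lemma rk_eq_of_basis {J X : Set α} (hJ : N.IsBasis J X) : rk N X = J.ncard := by
  have hXE : X ⊆ N.E := hJ.subset_ground
  have hub : ∀ n ∈ Set.ncard '' {I | N.Indep I ∧ I ⊆ X}, n ≤ J.ncard := by
    rintro n ⟨I, ⟨hI, hIX⟩, rfl⟩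
    obtain ⟨J', hJ', hIJ'⟩ := hI.subset_isBasis_of_subset hIX hXE
    have h1 : I.ncard ≤ J'.ncard := Set.ncard_le_ncard hIJ' (Set.toFinite _)
    have h2 : J'.ncard = J.ncard :=
      (hJ'.isBase_restrict).ncard_eq_ncard_of_isBase (hJ.isBase_restrict)
    omega
  have hmem : J.ncard ∈ Set.ncard '' {I | N.Indep I ∧ I ⊆ X} :=
    ⟨J, ⟨hJ.indep, hJ.subset⟩, rfl⟩
  exact le_antisymm (csSup_le ⟨_, hmem⟩ hub) (le_csSup ⟨J.ncard, hub⟩ hmem)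

lemma rk_restrict {R A : Set α} (hAR : A ⊆ R) : rk (N ↾ R) A = rk N A := by
  have hset : {I : Set α | (N ↾ R).Indep I ∧ I ⊆ A} = {I | N.Indep I ∧ I ⊆ A} := by
    ext I
    simp only [Set.mem_setOf_eq, Matroid.restrict_indep_iff]
    exact ⟨fun h => ⟨h.1.1, h.2⟩, fun h => ⟨⟨h.1, h.2.trans hAR⟩, h.2⟩⟩
  unfold rk
  rw [hset]

lemma rk_eq_of_subset_closure {A B : Set α} (hA : A ⊆ N.E) (hAB : A ⊆ B)
    (hB : B ⊆ N.closure A) : rk N B = rk N A := by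
  obtain ⟨J, hJ⟩ := N.exists_isBasis A hA
  have hJB : N.IsBasis J B := by
    refine hJ.indep.isBasis_of_subset_of_subset_closure (hJ.subset.trans hAB) ?_
    rwa [hJ.closure_eq_closure]
  rw [rk_eq_of_basis hJB, rk_eq_of_basis hJ]

lemma rk_insert_of_not_mem_closure {A : Set α} {x : α} (hA : A ⊆ N.E) (hx : x ∈ N.E)
    (hxc : x ∉ N.closure A) : rk N (insert x A) = rk N A + 1 := by
  obtain ⟨J, hJ⟩ := N.exists_isBasis A hA
  have hxJ : x ∉ N.closure J := by rwa [hJ.closure_eq_closure]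
  have hxJ' : x ∉ J := fun h => hxJ (N.subset_closure J hJ.indep.subset_ground h)
  have hind : N.Indep (insert x J) := by
    rw [hJ.indep.insert_indep_iff]
    exact Or.inl ⟨hx, hxJ⟩
  have hbasis : N.IsBasis (insert x J) (insert x A) := by
    refine hind.isBasis_of_subset_of_subset_closure (Set.insert_subset_insert hJ.subset) ?_
    refine Set.insert_subset (N.subset_closure _ hind.subset_ground (Set.mem_insert _ _)) ?_
    exact (hJ.subset_closure).trans (N.closure_subset_closure (Set.subset_insert _ _))
  rw [rk_eq_of_basis hbasis, rk_eq_of_basis hJ,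
    Set.ncard_insert_of_notMem hxJ' (Set.toFinite _)]

lemma mem_closure_of_rk_insert_eq {A : Set α} {x : α} (hA : A ⊆ N.E) (hx : x ∈ N.E)
    (h : rk N (insert x A) = rk N A) : x ∈ N.closure A := by
  by_contra hc
  rw [rk_insert_of_not_mem_closure hA hx hc] at h
  omega

lemma rk_insert_of_mem_closure {A : Set α} {x : α} (hA : A ⊆ N.E)
    (h : x ∈ N.closure A) : rk N (insert x A) = rk N A :=
  rk_eq_of_subset_closure hA (Set.subset_insert _ _)
    (Set.insert_subset h (N.subset_closure A hA))

lemma closure_restrict {R A : Set α} (hAR : A ⊆ R) (hR : R ⊆ N.E) :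
    (N ↾ R).closure A = N.closure A ∩ R := by
  ext x
  by_cases hxR : x ∈ R
  · have hxE : x ∈ N.E := hR hxR
    simp only [Set.mem_inter_iff, hxR, and_true]
    constructor
    · intro h
      refine mem_closure_of_rk_insert_eq (hAR.trans hR) hxE ?_
      have h1 := rk_insert_of_mem_closure (N := N ↾ R) hAR h
      rwa [rk_restrict (Set.insert_subset hxR hAR), rk_restrict hAR] at h1
    · intro h
      refine mem_closure_of_rk_insert_eq (N := N ↾ R) hAR (by simpa using hxR) ?_
      rw [rk_restrict (Set.insert_subset hxR hAR), rk_restrict hAR]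
      exact rk_insert_of_mem_closure (hAR.trans hR) h
  · constructor
    · intro h
      exact absurd ((N ↾ R).closure_subset_ground A h) (by simpa using hxR)
    · intro h
      exact absurd h.2 hxR

lemma exists_circuit_of_dep : ∀ (n : ℕ) (D : Set α), D.ncard ≤ n → N.Dep D →
    ∃ C, Circuit N C ∧ C ⊆ D := by
  intro n
  induction n with
  | zero =>
    intro D hD hdep
    have h0 : D = ∅ := by rw [← Set.ncard_eq_zero (Set.toFinite _)]; omega
    exact absurd (h0 ▸ N.empty_indep) hdep.not_indep
  | succ n ih =>
    intro D hD hdep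
    by_cases h : ∀ D' ⊂ D, N.Indep D'
    · exact ⟨D, ⟨hdep, h⟩, Set.Subset.rfl⟩
    · push_neg at h
      obtain ⟨D', hD'ss, hD'dep⟩ := h
      have : N.Dep D' := ⟨hD'dep, hD'ss.subset.trans hdep.subset_ground⟩
      obtain ⟨C, hC, hCD'⟩ := ih D' (by
        have := Set.ncard_lt_ncard hD'ss (Set.toFinite _)
        omega) this
      exact ⟨C, hC, hCD'.trans hD'ss.subset⟩

lemma dep_exists_circuit {D : Set α} (hdep : N.Dep D) : ∃ C, Circuit N C ∧ C ⊆ D :=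
  exists_circuit_of_dep D.ncard D le_rfl hdep

lemma exists_circuit_mem_of_mem_closure {W : Set α} {x : α} (hW : W ⊆ N.E)
    (hx : x ∈ N.closure W) (hxW : x ∉ W) :
    ∃ C, Circuit N C ∧ C ⊆ insert x W ∧ x ∈ C := by
  obtain ⟨J, hJ⟩ := N.exists_isBasis W hW
  have hxJc : x ∈ N.closure J := by rwa [hJ.closure_eq_closure]
  have hxJ : x ∉ J := fun h => hxW (hJ.subset h)
  have hdep : N.Dep (insert x J) := by
    rw [hJ.indep.insert_dep_iff]
    exact ⟨hxJc, fun h => hxW (hJ.subset h)⟩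
  obtain ⟨C, hC, hCsub⟩ := dep_exists_circuit hdep
  have hxC : x ∈ C := by
    by_contra hxC
    have : C ⊆ J := fun y hy => by
      rcases hCsub hy with rfl | h
      · exact absurd hy hxC
      · exact h
    exact hC.1.not_indep (hJ.indep.subset this)
  exact ⟨C, hC, hCsub.trans (Set.insert_subset_insert hJ.subset), hxC⟩

lemma mem_closure_of_circuit {C : Set α} {x : α} (hC : Circuit N C) (hx : x ∈ C) :
    x ∈ N.closure (C \ {x}) := by
  have hind : N.Indep (C \ {x}) := hC.2 _ (Set.sdiff_singleton_ssubset.2 hx)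
  have hdep : N.Dep (insert x (C \ {x})) := by
    rw [Set.insert_diff_singleton, Set.insert_eq_self.2 hx]
    exact hC.1
  rw [hind.insert_dep_iff] at hdep
  exact hdep.1

lemma circuit_restrict_iff {R C : Set α} (hR : R ⊆ N.E) :
    Circuit (N ↾ R) C ↔ Circuit N C ∧ C ⊆ R := by
  constructor
  · intro ⟨hdep, hmin⟩
    rw [Matroid.restrict_dep_iff] at hdep
    refine ⟨⟨⟨hdep.1, hdep.2.trans hR⟩, fun D hD => (hmin D hD).of_restrict⟩, hdep.2⟩
  · intro ⟨⟨hdep, hmin⟩, hCR⟩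
    refine ⟨Matroid.restrict_dep_iff.2 ⟨hdep.1, hCR⟩, fun D hD => ?_⟩
    exact (hmin D hD).indep_restrict_of_subset (hD.subset.trans hCR)

lemma cyclic_restrict_iff {R A : Set α} (hR : R ⊆ N.E) (hA : A ⊆ R) :
    Cyclic (N ↾ R) A ↔ Cyclic N A := by
  constructor
  · intro ⟨_, h⟩
    refine ⟨hA.trans hR, fun x hx => ?_⟩
    obtain ⟨C, hC, hCA, hxC⟩ := h x hx
    exact ⟨C, ((circuit_restrict_iff hR).1 hC).1, hCA, hxC⟩
  · intro ⟨_, h⟩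
    refine ⟨hA, fun x hx => ?_⟩
    obtain ⟨C, hC, hCA, hxC⟩ := h x hx
    exact ⟨C, (circuit_restrict_iff hR).2 ⟨hC, hCA.trans hA⟩, hCA, hxC⟩

lemma cyclic_union {A B : Set α} (hA : Cyclic N A) (hB : Cyclic N B) :
    Cyclic N (A ∪ B) := by
  refine ⟨Set.union_subset hA.1 hB.1, fun x hx => ?_⟩
  rcases hx with hx | hx
  · obtain ⟨C, hC, hCA, hxC⟩ := hA.2 x hx
    exact ⟨C, hC, hCA.trans Set.subset_union_left, hxC⟩
  · obtain ⟨C, hC, hCA, hxC⟩ := hB.2 x hx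
    exact ⟨C, hC, hCA.trans Set.subset_union_right, hxC⟩

lemma cyclic_closure {A : Set α} (hA : Cyclic N A) : Cyclic N (N.closure A) := by
  refine ⟨N.closure_subset_ground A, fun x hx => ?_⟩
  by_cases hxA : x ∈ A
  · obtain ⟨C, hC, hCA, hxC⟩ := hA.2 x hxA
    exact ⟨C, hC, hCA.trans (N.subset_closure A hA.1), hxC⟩
  · obtain ⟨C, hC, hCsub, hxC⟩ := exists_circuit_mem_of_mem_closure hA.1 hx hxA
    refine ⟨C, hC, hCsub.trans ?_, hxC⟩
    exact Set.insert_subset hx (N.subset_closure A hA.1)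

lemma cyclicFlat_closure {A : Set α} (hA : Cyclic N A) : CyclicFlat N (N.closure A) :=
  ⟨cyclic_closure hA, flat_closure N A⟩

end AuxBasic


section GammaTheory

variable {M : Matroid α} {e : α}

lemma deleteElem_def (M : Matroid α) (e : α) : deleteElem M e = M ↾ (M.E \ {e}) := rfl

lemma deleteElem_ground (M : Matroid α) (e : α) : (deleteElem M e).E = M.E \ {e} := rfl

lemma gamma_eq (M : Matroid α) (X : Finset α) :
    gamma M X = nullity M ↑X -
      ∑ Z ∈ Finset.univ.filter (fun Z : Finset α => CyclicFlat M ↑Z ∧ Z ⊂ X), gamma M Z := by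
  rw [gamma, Finset.sum_attach]

lemma gamma_deleteElem_eq_aux (M : Matroid α) (e : α) :
    ∀ (n : ℕ) (A : Finset α), A.card ≤ n → ↑A ⊆ M.E → e ∉ M.closure ↑A →
      gamma (deleteElem M e) A = gamma M A := by
  intro n
  induction n with
  | zero =>
    intro A hcard hA hecl
    have hA0 : A = ∅ := Finset.card_eq_zero.1 (Nat.le_zero.1 hcard)
    subst hA0
    rw [gamma_eq, gamma_eq]
    have h1 : ∀ Z : Finset α, ¬ (Z ⊂ (∅ : Finset α)) := fun Z h => (Finset.not_ssubset_empty Z) h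
    have he1 : Finset.univ.filter
        (fun Z : Finset α => CyclicFlat (deleteElem M e) ↑Z ∧ Z ⊂ (∅ : Finset α)) = ∅ := by
      apply Finset.filter_false_of_mem; intro Z _; exact fun h => h1 Z h.2
    have he2 : Finset.univ.filter
        (fun Z : Finset α => CyclicFlat M ↑Z ∧ Z ⊂ (∅ : Finset α)) = ∅ := by
      apply Finset.filter_false_of_mem; intro Z _; exact fun h => h1 Z h.2
    rw [he1, he2]
    simp only [Finset.sum_empty]
    congr 1
    unfold nullity
    rw [deleteElem_def, rk_restrict (show (↑(∅ : Finset α) : Set α) ⊆ M.E \ {e} by simp)]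
  | succ n ih =>
    intro A hcard hA hecl
    have heA : e ∉ (A : Set α) := fun h => hecl (M.subset_closure _ hA h)
    have hAR : (A : Set α) ⊆ M.E \ {e} := fun x hx => ⟨hA hx, fun hxe => heA (hxe ▸ hx)⟩
    have hfilt : Finset.univ.filter
        (fun Z : Finset α => CyclicFlat (deleteElem M e) ↑Z ∧ Z ⊂ A)
        = Finset.univ.filter (fun Z : Finset α => CyclicFlat M ↑Z ∧ Z ⊂ A) := by
      ext Z
      simp only [Finset.mem_filter, Finset.mem_univ, true_and, and_congr_left_iff]
      intro hZA
      have hZsub : (Z : Set α) ⊆ A := Finset.coe_subset.2 hZA.subset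
      have hZE : (Z : Set α) ⊆ M.E := hZsub.trans hA
      have heZclo : e ∉ M.closure ↑Z := fun h => hecl (M.closure_subset_closure hZsub h)
      have hZR : (Z : Set α) ⊆ M.E \ {e} := hZsub.trans hAR
      have hMcl_sub : M.closure ↑Z ⊆ M.E \ {e} := fun y hy =>
        ⟨M.closure_subset_ground _ hy, fun hye => heZclo (hye ▸ hy)⟩
      have hcl_eq : (M ↾ (M.E \ {e})).closure ↑Z = M.closure ↑Z := by
        rw [closure_restrict hZR diff_subset, Set.inter_eq_self_of_subset_left hMcl_sub]
      unfold CyclicFlat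
      rw [deleteElem_def, cyclic_restrict_iff diff_subset hZR, flat_iff_closure_eq,
        flat_iff_closure_eq, hcl_eq]
    rw [gamma_eq, gamma_eq, hfilt]
    have hnull : nullity (deleteElem M e) ↑A = nullity M ↑A := by
      unfold nullity
      rw [deleteElem_def, rk_restrict hAR]
    rw [hnull]
    congr 1
    apply Finset.sum_congr rfl
    intro Z hZ
    simp only [Finset.mem_filter, Finset.mem_univ, true_and] at hZ
    have hZsub : (Z : Set α) ⊆ A := Finset.coe_subset.2 hZ.2.subset
    exact ih Z (by have := Finset.card_lt_card hZ.2; omega) (hZsub.trans hA)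
      (fun h => hecl (M.closure_subset_closure hZsub h))

lemma gamma_deleteElem_eq {A : Finset α} (hA : ↑A ⊆ M.E) (hecl : e ∉ M.closure ↑A) :
    gamma (deleteElem M e) A = gamma M A :=
  gamma_deleteElem_eq_aux M e A.card A le_rfl hA hecl

lemma dgamma_eq_zero_of_not_mem {Z : Finset α} (hZ : CyclicFlat M ↑Z) (heZ : e ∉ Z) :
    dgamma M e Z = 0 := by
  unfold dgamma
  rw [Finset.erase_eq_of_notMem heZ, gamma_deleteElem_eq hZ.1.1
    (by rw [hZ.2.closure]; exact fun h => heZ (Finset.mem_coe.1 h)), sub_self]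

lemma closure_erase_of_cyclicFlat (he : e ∈ M.E) {Z : Finset α} (hZ : CyclicFlat M ↑Z)
    (heZ : e ∈ Z) : M.closure ↑(Z.erase e) = (↑Z : Set α) := by
  rw [Finset.coe_erase]
  apply Set.Subset.antisymm
  · exact (M.closure_subset_closure diff_subset).trans hZ.2.closure.subset
  · intro x hx
    by_cases hxe : x = e
    · subst hxe
      obtain ⟨C, hC, hCZ, hxC⟩ := hZ.1.2 x hx
      have h1 := mem_closure_of_circuit hC hxC
      exact M.closure_subset_closure (Set.diff_subset_diff_left hCZ) h1
    · exact M.subset_closure _ (Set.diff_subset.trans hZ.1.1) ⟨hx, hxe⟩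

lemma erase_flat_deleteElem (he : e ∈ M.E) {Z : Finset α} (hZ : CyclicFlat M ↑Z) (heZ : e ∈ Z) :
    (deleteElem M e).closure ↑(Z.erase e) = (↑(Z.erase e) : Set α) := by
  have hZE : (Z : Set α) ⊆ M.E := hZ.1.1
  have hsub : (↑(Z.erase e) : Set α) ⊆ M.E \ {e} := by
    rw [Finset.coe_erase]
    exact Set.diff_subset_diff_left hZE
  rw [deleteElem_def, closure_restrict hsub diff_subset,
    closure_erase_of_cyclicFlat he hZ heZ, Finset.coe_erase]
  ext x
  constructor
  · rintro ⟨hxZ, -, hxe⟩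
    exact ⟨hxZ, hxe⟩
  · rintro ⟨hxZ, hxe⟩
    exact ⟨hxZ, hZE hxZ, hxe⟩

lemma nullity_eq_of_no_circuit (N' : Matroid α) :
    ∀ (n : ℕ) (S W : Finset α), S.card ≤ n → W ⊆ S → ↑S ⊆ N'.E →
      (∀ a ∈ S, a ∉ W → ∀ C, Circuit N' C → C ⊆ (S : Set α) → a ∉ C) →
      nullity N' ↑S = nullity N' ↑W := by
  intro n
  induction n with
  | zero =>
    intro S W hcard hWS _ _
    have : S = ∅ := Finset.card_eq_zero.1 (Nat.le_zero.1 hcard)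
    subst this
    rw [Finset.subset_empty.1 hWS]
  | succ n ih =>
    intro S W hcard hWS hSE hcirc
    by_cases hSW : S = W
    · rw [hSW]
    · have hss : W ⊂ S := hWS.ssubset_of_ne (fun h => hSW h.symm)
      obtain ⟨a, haS, haW⟩ := Finset.exists_of_ssubset hss
      have haE : a ∈ N'.E := hSE haS
      have haSc : a ∈ (S : Set α) := haS
      have hnc : a ∉ N'.closure ((S : Set α) \ {a}) := by
        intro hmem
        obtain ⟨C, hC, hCsub, haC⟩ := exists_circuit_mem_of_mem_closure
          (diff_subset.trans hSE) hmem (fun h => h.2 rfl)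
        rw [Set.insert_diff_singleton, Set.insert_eq_self.2 haSc] at hCsub
        exact hcirc a haS haW C hC hCsub haC
      have hrk : rk N' ↑S = rk N' ((S : Set α) \ {a}) + 1 := by
        have h1 := rk_insert_of_not_mem_closure (diff_subset.trans hSE) haE hnc
        rwa [Set.insert_diff_singleton, Set.insert_eq_self.2 haSc] at h1
      have hstep : nullity N' ↑S = nullity N' ↑(S.erase a) := by
        unfold nullity
        rw [Set.ncard_coe_finset, Set.ncard_coe_finset, Finset.coe_erase, hrk]
        have hc1 : (S.erase a).card + 1 = S.card := Finset.card_erase_add_one haS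
        push_cast [← hc1]
        ring
      rw [hstep]
      apply ih (S.erase a) W
      · have := Finset.card_erase_add_one haS; omega
      · exact Finset.subset_erase.2 ⟨hWS, haW⟩
      · exact (Finset.coe_subset.2 (Finset.erase_subset a S)).trans hSE
      · intro b hbS hbW C hC hCsub hbC
        exact hcirc b (Finset.erase_subset a S hbS) hbW C hC
          (hCsub.trans (Finset.coe_subset.2 (Finset.erase_subset a S))) hbC

lemma erase_cyclicFlat_or_gamma_zero (he : e ∈ M.E) {Z : Finset α} (hZ : CyclicFlat M ↑Z)
    (heZ : e ∈ Z) :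
    CyclicFlat (deleteElem M e) ↑(Z.erase e) ∨ gamma (deleteElem M e) (Z.erase e) = 0 := by
  set N := deleteElem M e with hN
  have hflat : N.closure ↑(Z.erase e) = (↑(Z.erase e) : Set α) :=
    erase_flat_deleteElem he hZ heZ
  have hZeE : (↑(Z.erase e) : Set α) ⊆ N.E := by
    rw [deleteElem_ground, Finset.coe_erase]
    exact Set.diff_subset_diff_left hZ.1.1
  by_cases hcyc : Cyclic N ↑(Z.erase e)
  · exact Or.inl ⟨hcyc, flat_of_closure_eq hflat⟩
  · right
    set W : Finset α := (Z.erase e).filter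
      (fun a => ∃ C, Circuit N C ∧ C ⊆ (↑(Z.erase e) : Set α) ∧ a ∈ C) with hWdef
    have hWsub : W ⊆ Z.erase e := Finset.filter_subset _ _
    have hWE : (↑W : Set α) ⊆ N.E := (Finset.coe_subset.2 hWsub).trans hZeE
    have hWcyc : Cyclic N ↑W := by
      refine ⟨hWE, fun a ha => ?_⟩
      obtain ⟨haZ, C, hC, hCsub, haC⟩ := Finset.mem_filter.1 (Finset.mem_coe.1 ha)
      refine ⟨C, hC, fun b hbC => ?_, haC⟩
      have hbZ : b ∈ Z.erase e := Finset.mem_coe.1 (hCsub hbC)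
      exact Finset.mem_coe.2 (Finset.mem_filter.2 ⟨hbZ, C, hC, hCsub, hbC⟩)
    have hWne : W ≠ Z.erase e := by
      intro h
      apply hcyc
      rw [← h]
      exact hWcyc
    have hWflat : N.closure ↑W = (↑W : Set α) := by
      apply Set.Subset.antisymm
      · intro x hx
        have hxZe : x ∈ (↑(Z.erase e) : Set α) := by
          rw [← hflat]
          exact N.closure_subset_closure (Finset.coe_subset.2 hWsub) hx
        by_contra hxW
        obtain ⟨C, hC, hCsub, hxC⟩ := exists_circuit_mem_of_mem_closure hWE hx hxW
        have hCze : C ⊆ (↑(Z.erase e) : Set α) := by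
          refine hCsub.trans (Set.insert_subset hxZe (Finset.coe_subset.2 hWsub))
        exact hxW (Finset.mem_coe.2 (Finset.mem_filter.2
          ⟨Finset.mem_coe.1 hxZe, C, hC, hCze, hxC⟩))
      · exact N.subset_closure _ hWE
    have hWcf : CyclicFlat N ↑W := ⟨hWcyc, flat_of_closure_eq hWflat⟩
    have hnull : nullity N ↑(Z.erase e) = nullity N ↑W := by
      apply nullity_eq_of_no_circuit N (Z.erase e).card (Z.erase e) W le_rfl hWsub hZeE
      intro a haS haW C hC hCsub haC
      exact haW (Finset.mem_filter.2 ⟨haS, C, hC, hCsub, haC⟩)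
    have hfilt : Finset.univ.filter (fun B : Finset α => CyclicFlat N ↑B ∧ B ⊂ Z.erase e)
        = Finset.univ.filter (fun B : Finset α => CyclicFlat N ↑B ∧ B ⊆ W) := by
      ext B
      simp only [Finset.mem_filter, Finset.mem_univ, true_and, and_congr_right_iff]
      intro hB
      constructor
      · intro hBss
        intro b hbB
        have hbZe : b ∈ Z.erase e := hBss.subset hbB
        obtain ⟨C, hC, hCB, hbC⟩ := hB.1.2 b (Finset.mem_coe.2 hbB)
        exact Finset.mem_filter.2 ⟨hbZe, C, hC,
          hCB.trans (Finset.coe_subset.2 hBss.subset), hbC⟩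
      · intro hBW
        exact lt_of_le_of_lt hBW (hWsub.ssubset_of_ne hWne)
    rw [gamma_eq, hfilt, hnull]
    have hsplit : Finset.univ.filter (fun B : Finset α => CyclicFlat N ↑B ∧ B ⊆ W)
        = insert W (Finset.univ.filter (fun B : Finset α => CyclicFlat N ↑B ∧ B ⊂ W)) := by
      ext B
      simp only [Finset.mem_insert, Finset.mem_filter, Finset.mem_univ, true_and]
      constructor
      · rintro ⟨hcf, hsub⟩
        rcases lt_or_eq_of_le hsub with h | h
        · exact Or.inr ⟨hcf, h⟩
        · exact Or.inl h
      · rintro (rfl | ⟨hcf, hss⟩)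
        · exact ⟨hWcf, le_refl _⟩
        · exact ⟨hcf, hss.subset⟩
    have hWnotmem : W ∉ Finset.univ.filter (fun B : Finset α => CyclicFlat N ↑B ∧ B ⊂ W) := by
      simp only [Finset.mem_filter, Finset.mem_univ, true_and, not_and]
      exact fun _ h => ssubset_irrefl W h
    rw [hsplit, Finset.sum_insert hWnotmem, gamma_eq]
    ring

end GammaTheory


section Star

variable {M : Matroid α} {e : α}

lemma closure_subset_insert_of_flat {A : Finset α}
    (hA : CyclicFlat (deleteElem M e) ↑A) : M.closure ↑A ⊆ insert e ↑A := by
  have hAR : (↑A : Set α) ⊆ M.E \ {e} := by rw [← deleteElem_ground M e]; exact hA.1.1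
  intro x hx
  by_cases hxe : x = e
  · exact hxe ▸ Set.mem_insert _ _
  · apply Set.mem_insert_of_mem
    have hmem : x ∈ (M ↾ (M.E \ {e})).closure ↑A := by
      rw [closure_restrict hAR diff_subset]
      exact ⟨hx, M.closure_subset_ground _ hx, hxe⟩
    rw [← deleteElem_def, hA.2.closure] at hmem
    exact hmem

lemma lift_cyclicFlat_mem (he : e ∈ M.E) {A : Finset α}
    (hA : CyclicFlat (deleteElem M e) ↑A) (hecl : e ∈ M.closure ↑A) :
    CyclicFlat M ↑(insert e A) := by
  have hAR : (↑A : Set α) ⊆ M.E \ {e} := by rw [← deleteElem_ground M e]; exact hA.1.1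
  have hAE : (↑A : Set α) ⊆ M.E := hAR.trans diff_subset
  have heA : e ∉ (↑A : Set α) := fun h => (hAR h).2 rfl
  have hcl_eq : M.closure ↑A = insert e ↑A :=
    Set.Subset.antisymm (closure_subset_insert_of_flat hA)
      (Set.insert_subset hecl (M.subset_closure _ hAE))
  rw [Finset.coe_insert]
  constructor
  · constructor
    · rw [← hcl_eq]; exact M.closure_subset_ground _
    · intro x hx
      rcases Set.mem_insert_iff.1 hx with rfl | hxA
      · obtain ⟨C, hC, hCsub, hxC⟩ := exists_circuit_mem_of_mem_closure hAE hecl heA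
        exact ⟨C, hC, hCsub, hxC⟩
      · obtain ⟨C, hC, hCA, hxC⟩ := hA.1.2 x hxA
        rw [deleteElem_def] at hC
        exact ⟨C, ((circuit_restrict_iff diff_subset).1 hC).1,
          hCA.trans (Set.subset_insert _ _), hxC⟩
  · exact hcl_eq ▸ flat_closure M ↑A

lemma lift_cyclicFlat_notmem {A : Finset α}
    (hA : CyclicFlat (deleteElem M e) ↑A) (hecl : e ∉ M.closure ↑A) :
    CyclicFlat M ↑A := by
  have hAR : (↑A : Set α) ⊆ M.E \ {e} := by rw [← deleteElem_ground M e]; exact hA.1.1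
  have hAE : (↑A : Set α) ⊆ M.E := hAR.trans diff_subset
  have hcl_eq : M.closure ↑A = ↑A := by
    apply Set.Subset.antisymm
    · intro x hx
      rcases Set.mem_insert_iff.1 (closure_subset_insert_of_flat hA hx) with rfl | hxA
      · exact absurd hx hecl
      · exact hxA
    · exact M.subset_closure _ hAE
  constructor
  · refine ⟨hAE, fun x hx => ?_⟩
    obtain ⟨C, hC, hCA, hxC⟩ := hA.1.2 x hx
    rw [deleteElem_def] at hC
    exact ⟨C, ((circuit_restrict_iff diff_subset).1 hC).1, hCA, hxC⟩
  · exact flat_of_closure_eq hcl_eq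

lemma cyclicFlat_deleteElem_of_not_mem {Z : Finset α} (hZ : CyclicFlat M ↑Z) (heZ : e ∉ Z) :
    CyclicFlat (deleteElem M e) ↑Z := by
  have hZE : (↑Z : Set α) ⊆ M.E := hZ.1.1
  have heclo : e ∉ M.closure ↑Z := by
    rw [hZ.2.closure]; exact fun h => heZ (Finset.mem_coe.1 h)
  have hZR : (↑Z : Set α) ⊆ M.E \ {e} := fun x hx =>
    ⟨hZE hx, fun hxe => heclo (hxe ▸ M.subset_closure _ hZE hx)⟩
  have hMcl_sub : M.closure ↑Z ⊆ M.E \ {e} := fun y hy =>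
    ⟨M.closure_subset_ground _ hy, fun hye => heclo (hye ▸ hy)⟩
  constructor
  · rw [deleteElem_def, cyclic_restrict_iff diff_subset hZR]
    exact hZ.1
  · apply flat_of_closure_eq
    rw [deleteElem_def, closure_restrict hZR diff_subset,
      Set.inter_eq_self_of_subset_left hMcl_sub, hZ.2.closure]

lemma star (he : e ∈ M.E) {X : Finset α} (hX : Cyclic M ↑X) (heX : e ∈ X) :
    dgamma M e X = -1 -
      ∑ Z ∈ Finset.univ.filter (fun Z : Finset α => CyclicFlat M ↑Z ∧ Z ⊂ X),
        dgamma M e Z := by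
  have hXE : (↑X : Set α) ⊆ M.E := hX.1
  have heXc : e ∈ (↑X : Set α) := heX
  have heclo : e ∈ M.closure ((↑X : Set α) \ {e}) := by
    obtain ⟨C, hC, hCX, heC⟩ := hX.2 e heXc
    exact M.closure_subset_closure (Set.diff_subset_diff_left hCX)
      (mem_closure_of_circuit hC heC)
  have hrk1 : rk (deleteElem M e) ↑(X.erase e) = rk M ((↑X : Set α) \ {e}) := by
    rw [deleteElem_def, Finset.coe_erase]
    exact rk_restrict (Set.diff_subset_diff_left hXE)
  have hrk2 : rk M (↑X : Set α) = rk M ((↑X : Set α) \ {e}) := by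
    apply rk_eq_of_subset_closure (diff_subset.trans hXE) diff_subset
    intro x hx
    by_cases hxe : x = e
    · exact hxe ▸ heclo
    · exact M.subset_closure _ (diff_subset.trans hXE) ⟨hx, hxe⟩
  have hnull : nullity (deleteElem M e) ↑(X.erase e) = nullity M ↑X - 1 := by
    unfold nullity
    rw [Set.ncard_coe_finset, Set.ncard_coe_finset, hrk1, hrk2]
    have hc1 : (X.erase e).card + 1 = X.card := Finset.card_erase_add_one heX
    push_cast [← hc1]
    ring
  have key : ∑ A ∈ Finset.univ.filter
        (fun A : Finset α => CyclicFlat (deleteElem M e) ↑A ∧ A ⊂ X.erase e),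
        gamma (deleteElem M e) A
      = ∑ Z ∈ Finset.univ.filter (fun Z : Finset α => CyclicFlat M ↑Z ∧ Z ⊂ X),
        gamma (deleteElem M e) (Z.erase e) := by
    rw [← Finset.sum_filter_of_ne
        (p := fun A : Finset α => gamma (deleteElem M e) A ≠ 0) (fun _ _ h => h),
      ← Finset.sum_filter_of_ne
        (p := fun Z : Finset α => gamma (deleteElem M e) (Z.erase e) ≠ 0) (fun _ _ h => h)]
    apply Finset.sum_nbij'
      (i := fun A : Finset α => if e ∈ M.closure ↑A then insert e A else A)
      (j := fun Z : Finset α => Z.erase e)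
    · -- hi
      intro A hA
      simp only [Finset.mem_filter, Finset.mem_univ, true_and] at hA ⊢
      obtain ⟨⟨hAcf, hAss⟩, hAne⟩ := hA
      have heA : e ∉ A := fun h => (Finset.mem_erase.1 (hAss.subset h)).1 rfl
      by_cases hecl : e ∈ M.closure ↑A
      · rw [if_pos hecl]
        refine ⟨⟨lift_cyclicFlat_mem he hAcf hecl, ?_⟩, ?_⟩
        · rw [Finset.ssubset_iff_subset_ne]
          refine ⟨Finset.insert_subset heX (hAss.subset.trans (Finset.erase_subset e X)), ?_⟩
          intro hcon
          exact hAss.ne (by rw [← hcon, Finset.erase_insert heA])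
        · rw [Finset.erase_insert heA]; exact hAne
      · rw [if_neg hecl]
        exact ⟨⟨lift_cyclicFlat_notmem hAcf hecl, lt_trans hAss (Finset.erase_ssubset heX)⟩,
          by rw [Finset.erase_eq_of_notMem heA]; exact hAne⟩
    · -- hj
      intro Z hZ
      simp only [Finset.mem_filter, Finset.mem_univ, true_and] at hZ ⊢
      obtain ⟨⟨hZcf, hZss⟩, hZne⟩ := hZ
      by_cases heZ : e ∈ Z
      · have hcfN : CyclicFlat (deleteElem M e) ↑(Z.erase e) := by
          rcases erase_cyclicFlat_or_gamma_zero he hZcf heZ with h | h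
          · exact h
          · exact absurd h hZne
        refine ⟨⟨hcfN, ?_⟩, hZne⟩
        rw [Finset.ssubset_iff_subset_ne]
        refine ⟨Finset.erase_subset_erase e hZss.subset, ?_⟩
        intro hcon
        exact hZss.ne (by rw [← Finset.insert_erase heZ, hcon, Finset.insert_erase heX])
      · have herZ : Z.erase e = Z := Finset.erase_eq_of_notMem heZ
        rw [herZ] at hZne ⊢
        refine ⟨⟨cyclicFlat_deleteElem_of_not_mem hZcf heZ, ?_⟩, hZne⟩
        rw [Finset.ssubset_iff_subset_ne]
        refine ⟨Finset.subset_erase.2 ⟨hZss.subset, heZ⟩, ?_⟩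
        · intro hcon
          have : e ∈ M.closure ↑Z := by
            have h2 : (↑Z : Set α) = (↑X : Set α) \ {e} := by
              rw [hcon, Finset.coe_erase]
            rw [h2]
            exact heclo
          rw [hZcf.2.closure] at this
          exact heZ (Finset.mem_coe.1 this)
    · -- left_inv
      intro A hA
      simp only [Finset.mem_filter, Finset.mem_univ, true_and] at hA
      obtain ⟨⟨hAcf, hAss⟩, _⟩ := hA
      have heA : e ∉ A := fun h => (Finset.mem_erase.1 (hAss.subset h)).1 rfl
      by_cases hecl : e ∈ M.closure ↑A
      · rw [if_pos hecl, Finset.erase_insert heA]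
      · rw [if_neg hecl, Finset.erase_eq_of_notMem heA]
    · -- right_inv
      intro Z hZ
      simp only [Finset.mem_filter, Finset.mem_univ, true_and] at hZ
      obtain ⟨⟨hZcf, hZss⟩, _⟩ := hZ
      by_cases heZ : e ∈ Z
      · have hecl : e ∈ M.closure ↑(Z.erase e) := by
          rw [closure_erase_of_cyclicFlat he hZcf heZ]
          exact heZ
        rw [if_pos hecl, Finset.insert_erase heZ]
      · have herZ : Z.erase e = Z := Finset.erase_eq_of_notMem heZ
        rw [herZ, if_neg (by rw [hZcf.2.closure]; exact fun h => heZ (Finset.mem_coe.1 h))]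
    · -- h : values
      intro A hA
      simp only [Finset.mem_filter, Finset.mem_univ, true_and] at hA
      obtain ⟨⟨hAcf, hAss⟩, _⟩ := hA
      have heA : e ∉ A := fun h => (Finset.mem_erase.1 (hAss.subset h)).1 rfl
      by_cases hecl : e ∈ M.closure ↑A
      · rw [if_pos hecl, Finset.erase_insert heA]
      · rw [if_neg hecl, Finset.erase_eq_of_notMem heA]
  unfold dgamma
  rw [gamma_eq (deleteElem M e) (X.erase e), gamma_eq M X, hnull, key]
  rw [Finset.sum_sub_distrib]
  ring

end Star


section MainArg

variable {M : Matroid α} {e : α}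

lemma star' (he : e ∈ M.E) {X : Finset α} (hX : Cyclic M ↑X) (heX : e ∈ X) :
    dgamma M e X = -1 -
      ∑ Z ∈ Finset.univ.filter (fun Z : Finset α => CyclicFlat M ↑Z ∧ e ∈ Z ∧ Z ⊂ X),
        dgamma M e Z := by
  rw [star he hX heX]
  congr 1
  refine (Finset.sum_subset ?_ ?_).symm
  · intro Z hZ
    simp only [Finset.mem_filter, Finset.mem_univ, true_and] at hZ ⊢
    exact ⟨hZ.1, hZ.2.2⟩
  · intro Z hZ hZn
    simp only [Finset.mem_filter, Finset.mem_univ, true_and] at hZ hZn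
    exact dgamma_eq_zero_of_not_mem hZ.1 (fun h => hZn ⟨hZ.1, h, hZ.2⟩)

lemma sum_ideal (he : e ∈ M.E) {F : Finset α} (hF : CyclicFlat M ↑F) (heF : e ∈ F) :
    ∑ B ∈ Finset.univ.filter (fun B : Finset α => CyclicFlat M ↑B ∧ e ∈ B ∧ B ⊆ F),
      dgamma M e B = -1 := by
  have hsplit : Finset.univ.filter (fun B : Finset α => CyclicFlat M ↑B ∧ e ∈ B ∧ B ⊆ F)
      = insert F (Finset.univ.filter
          (fun B : Finset α => CyclicFlat M ↑B ∧ e ∈ B ∧ B ⊂ F)) := by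
    ext B
    simp only [Finset.mem_insert, Finset.mem_filter, Finset.mem_univ, true_and]
    constructor
    · rintro ⟨hcf, heB, hsub⟩
      rcases lt_or_eq_of_le hsub with h | h
      · exact Or.inr ⟨hcf, heB, h⟩
      · exact Or.inl h
    · rintro (rfl | ⟨hcf, heB, hss⟩)
      · exact ⟨hF, heF, le_refl _⟩
      · exact ⟨hcf, heB, hss.subset⟩
  have hnm : F ∉ Finset.univ.filter
      (fun B : Finset α => CyclicFlat M ↑B ∧ e ∈ B ∧ B ⊂ F) := by
    simp only [Finset.mem_filter, Finset.mem_univ, true_and]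
    rintro ⟨-, -, h⟩
    exact ssubset_irrefl F h
  rw [hsplit, Finset.sum_insert hnm, star' he hF.1 heF]
  ring

lemma jn_props (he : e ∈ M.E) {B x : Finset α} (hB : CyclicFlat M ↑B)
    (hx : CyclicFlat M ↑x) (heB : e ∈ B) :
    CyclicFlat M ↑((M.closure (↑B ∪ ↑x)).toFinset)
      ∧ x ⊆ (M.closure (↑B ∪ ↑x)).toFinset
      ∧ B ⊆ (M.closure (↑B ∪ ↑x)).toFinset := by
  have hBE : (↑B : Set α) ⊆ M.E := hB.1.1
  have hxE : (↑x : Set α) ⊆ M.E := hx.1.1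
  have hUE : (↑B ∪ ↑x : Set α) ⊆ M.E := Set.union_subset hBE hxE
  have hcoe : ↑((M.closure (↑B ∪ ↑x)).toFinset) = M.closure (↑B ∪ ↑x) :=
    Set.coe_toFinset _
  refine ⟨by rw [hcoe]; exact cyclicFlat_closure (cyclic_union hB.1 hx.1), ?_, ?_⟩
  · intro a ha
    rw [← Finset.mem_coe, hcoe]
    exact M.subset_closure _ hUE (Or.inr ha)
  · intro a ha
    rw [← Finset.mem_coe, hcoe]
    exact M.subset_closure _ hUE (Or.inl ha)

lemma jn_subset (he : e ∈ M.E) {B x F : Finset α} (hB : CyclicFlat M ↑B)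
    (hx : CyclicFlat M ↑x) (hF : CyclicFlat M ↑F) (hBF : B ⊆ F) (hxF : x ⊆ F) :
    (M.closure (↑B ∪ ↑x)).toFinset ⊆ F := by
  intro a ha
  rw [← Finset.mem_coe, Set.coe_toFinset] at ha
  have hsub : M.closure (↑B ∪ ↑x) ⊆ (↑F : Set α) := by
    rw [← hF.2.closure]
    exact M.closure_subset_closure
      (Set.union_subset (Finset.coe_subset.2 hBF) (Finset.coe_subset.2 hxF))
  exact Finset.mem_coe.1 (hsub ha)

lemma weisner (he : e ∈ M.E) :
    ∀ (n : ℕ) (F x : Finset α), F.card ≤ n → CyclicFlat M ↑x → e ∈ x →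
      CyclicFlat M ↑F → x ⊆ F →
      ∑ B ∈ Finset.univ.filter (fun B : Finset α => CyclicFlat M ↑B ∧ e ∈ B ∧
          (M.closure (↑B ∪ ↑x)).toFinset = F), dgamma M e B
        = if F = x then -1 else 0 := by
  intro n
  induction n with
  | zero =>
    intro F x hcard hx hex hF hxF
    have h1 : e ∈ F := hxF hex
    have h2 : F = ∅ := Finset.card_eq_zero.1 (Nat.le_zero.1 hcard)
    rw [h2] at h1
    exact absurd h1 (Finset.notMem_empty e)
  | succ n ih =>
    intro F x hcard hx hex hF hxF
    have hmaps : ∀ B ∈ Finset.univ.filter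
        (fun B : Finset α => CyclicFlat M ↑B ∧ e ∈ B ∧ B ⊆ F),
        (M.closure (↑B ∪ ↑x)).toFinset ∈ Finset.univ.filter
          (fun F' : Finset α => CyclicFlat M ↑F' ∧ x ⊆ F' ∧ F' ⊆ F) := by
      intro B hB
      simp only [Finset.mem_filter, Finset.mem_univ, true_and] at hB ⊢
      obtain ⟨hBcf, heB, hBF⟩ := hB
      obtain ⟨h1, h2, _⟩ := jn_props he hBcf hx heB
      exact ⟨h1, h2, jn_subset he hBcf hx hF hBF hxF⟩
    have hpart := Finset.sum_fiberwise_of_maps_to hmaps (dgamma M e)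
    rw [sum_ideal he hF (hxF hex)] at hpart
    have hpart2 : ∑ F' ∈ Finset.univ.filter
        (fun F' : Finset α => CyclicFlat M ↑F' ∧ x ⊆ F' ∧ F' ⊆ F),
        (∑ B ∈ Finset.univ.filter (fun B : Finset α => CyclicFlat M ↑B ∧ e ∈ B ∧
            (M.closure (↑B ∪ ↑x)).toFinset = F'), dgamma M e B) = -1 := by
      rw [← hpart]
      apply Finset.sum_congr rfl
      intro F' hF'
      simp only [Finset.mem_filter, Finset.mem_univ, true_and] at hF'
      apply Finset.sum_congr
      · ext B
        simp only [Finset.mem_filter, Finset.mem_univ, true_and]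
        constructor
        · rintro ⟨h1, h2, h4⟩
          refine ⟨⟨h1, h2, ?_⟩, h4⟩
          obtain ⟨-, -, h3⟩ := jn_props he h1 hx h2
          exact (h4 ▸ h3).trans hF'.2.2
        · rintro ⟨⟨h1, h2, -⟩, h4⟩
          exact ⟨h1, h2, h4⟩
      · intro _ _; rfl
    have hFmem : F ∈ Finset.univ.filter
        (fun F' : Finset α => CyclicFlat M ↑F' ∧ x ⊆ F' ∧ F' ⊆ F) := by
      simp only [Finset.mem_filter, Finset.mem_univ, true_and]
      exact ⟨hF, hxF, le_refl _⟩
    rw [← Finset.sum_erase_add _ _ hFmem] at hpart2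
    have hih : ∀ F' ∈ (Finset.univ.filter
        (fun F' : Finset α => CyclicFlat M ↑F' ∧ x ⊆ F' ∧ F' ⊆ F)).erase F,
        (∑ B ∈ Finset.univ.filter (fun B : Finset α => CyclicFlat M ↑B ∧ e ∈ B ∧
            (M.closure (↑B ∪ ↑x)).toFinset = F'), dgamma M e B)
        = if F' = x then (-1 : ℤ) else 0 := by
      intro F' hF'
      obtain ⟨hne, hF'mem⟩ := Finset.mem_erase.1 hF'
      simp only [Finset.mem_filter, Finset.mem_univ, true_and] at hF'mem
      refine ih F' x ?_ hx hex hF'mem.1 hF'mem.2.1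
      have hss : F' ⊂ F := hF'mem.2.2.ssubset_of_ne hne
      have := Finset.card_lt_card hss
      omega
    rw [Finset.sum_congr rfl hih, Finset.sum_ite_eq'] at hpart2
    by_cases hFx : F = x
    · have hxnot : x ∉ (Finset.univ.filter
          (fun F' : Finset α => CyclicFlat M ↑F' ∧ x ⊆ F' ∧ F' ⊆ F)).erase F :=
        fun h => (Finset.mem_erase.1 h).1 hFx.symm
      rw [if_neg hxnot] at hpart2
      rw [if_pos hFx]
      have hgoal : (M.closure (↑F ∪ ↑x)).toFinset = F → True := fun _ => trivial
      subst hFx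
      linarith
    · have hxmem : x ∈ (Finset.univ.filter
          (fun F' : Finset α => CyclicFlat M ↑F' ∧ x ⊆ F' ∧ F' ⊆ F)).erase F := by
        refine Finset.mem_erase.2 ⟨fun h => hFx h.symm, ?_⟩
        simp only [Finset.mem_filter, Finset.mem_univ, true_and]
        exact ⟨hx, le_refl _, hxF⟩
      rw [if_pos hxmem] at hpart2
      rw [if_neg hFx]
      linarith

end MainArg


section Decomp

variable {M : Matroid α} {e : α}

lemma sum_Q_decomp (he : e ∈ M.E) {X x : Finset α} (hx : CyclicFlat M ↑x) (hex : e ∈ x)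
    (hxX : x ⊂ X) :
    ∑ Z ∈ Finset.univ.filter (fun Z : Finset α => CyclicFlat M ↑Z ∧ e ∈ Z ∧ Z ⊂ X),
        dgamma M e Z
    = -1 + ∑ F' ∈ (Finset.univ.filter
          (fun F' : Finset α => CyclicFlat M ↑F' ∧ x ⊆ F')).filter (fun F' : Finset α => ¬ F' ⊂ X),
        ∑ Z ∈ (Finset.univ.filter
            (fun Z : Finset α => CyclicFlat M ↑Z ∧ e ∈ Z ∧ Z ⊂ X)).filter
            (fun Z : Finset α => (M.closure (↑Z ∪ ↑x)).toFinset = F'), dgamma M e Z := by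
  have hmaps : ∀ Z ∈ Finset.univ.filter
      (fun Z : Finset α => CyclicFlat M ↑Z ∧ e ∈ Z ∧ Z ⊂ X),
      (M.closure (↑Z ∪ ↑x)).toFinset ∈ Finset.univ.filter
        (fun F' : Finset α => CyclicFlat M ↑F' ∧ x ⊆ F') := by
    intro Z hZ
    simp only [Finset.mem_filter, Finset.mem_univ, true_and] at hZ ⊢
    obtain ⟨h1, h2, -⟩ := jn_props he hZ.1 hx hZ.2.1
    exact ⟨h1, h2⟩
  have hpart := (Finset.sum_fiberwise_of_maps_to hmaps (dgamma M e)).symm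
  rw [← Finset.sum_filter_add_sum_filter_not (Finset.univ.filter
    (fun F' : Finset α => CyclicFlat M ↑F' ∧ x ⊆ F')) (fun F' : Finset α => F' ⊂ X)] at hpart
  have hEval : ∀ F' ∈ (Finset.univ.filter
      (fun F' : Finset α => CyclicFlat M ↑F' ∧ x ⊆ F')).filter (fun F' : Finset α => F' ⊂ X),
      (∑ Z ∈ (Finset.univ.filter
          (fun Z : Finset α => CyclicFlat M ↑Z ∧ e ∈ Z ∧ Z ⊂ X)).filter
          (fun Z : Finset α => (M.closure (↑Z ∪ ↑x)).toFinset = F'), dgamma M e Z)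
      = if F' = x then (-1 : ℤ) else 0 := by
    intro F' hF'
    simp only [Finset.mem_filter, Finset.mem_univ, true_and] at hF'
    obtain ⟨⟨hF'cf, hxF'⟩, hF'X⟩ := hF'
    have hfib : (Finset.univ.filter
        (fun Z : Finset α => CyclicFlat M ↑Z ∧ e ∈ Z ∧ Z ⊂ X)).filter
        (fun Z : Finset α => (M.closure (↑Z ∪ ↑x)).toFinset = F')
        = Finset.univ.filter (fun Z : Finset α => CyclicFlat M ↑Z ∧ e ∈ Z ∧
            (M.closure (↑Z ∪ ↑x)).toFinset = F') := by
      ext Z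
      simp only [Finset.mem_filter, Finset.mem_univ, true_and]
      constructor
      · rintro ⟨⟨a, b, -⟩, d⟩
        exact ⟨a, b, d⟩
      · rintro ⟨a, b, d⟩
        refine ⟨⟨a, b, ?_⟩, d⟩
        obtain ⟨-, -, h3⟩ := jn_props he a hx b
        exact lt_of_le_of_lt (d ▸ h3) hF'X
    rw [hfib]
    exact weisner he F'.card F' x le_rfl hx hex hF'cf hxF'
  rw [Finset.sum_congr rfl hEval, Finset.sum_ite_eq'] at hpart
  rw [if_pos (by
    simp only [Finset.mem_filter, Finset.mem_univ, true_and]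
    exact ⟨⟨hx, le_refl _⟩, hxX⟩)] at hpart
  exact hpart

end Decomp


theorem statement_14 (M : Matroid α) (e : α) (he : e ∈ M.E) :
    (∀ X : Finset α, Cyclic M ↑X → e ∈ X →
      (∃ ZX : Finset α, CyclicFlat M ↑ZX ∧ ZX ⊂ X ∧ 0 < dgamma M e ZX) →
      (∀ Z0 Z1 : Finset α, CyclicFlat M ↑Z0 → CyclicFlat M ↑Z1 → Z0 ⊂ X → Z1 ⊂ X →
        0 < dgamma M e Z0 → 0 < dgamma M e Z1 → M.closure (↑Z0 ∪ ↑Z1) ⊂ (↑X : Set α)) →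
      0 ≤ dgamma M e X) ∧
    (∀ W : Finset α, Cyclic M ↑W → e ∈ W →
      (∀ Z0 Z1 : Finset α, CyclicFlat M ↑Z0 → CyclicFlat M ↑Z1 → Z0 ⊂ W → Z1 ⊂ W →
        dgamma M e Z0 < 0 → dgamma M e Z1 < 0 → M.closure (↑Z0 ∪ ↑Z1) ⊂ (↑W : Set α)) →
      dgamma M e W ≤ 0) := by
  constructor
  · rintro X hX heX ⟨ZX, hZXcf, hZXss, hZXpos⟩ hjoin
    have heZX : e ∈ ZX := by
      by_contra h
      rw [dgamma_eq_zero_of_not_mem hZXcf h] at hZXpos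
      exact lt_irrefl 0 hZXpos
    have hstar := star' he hX heX
    have hdec := sum_Q_decomp he hZXcf heZX hZXss
    have hbound : ∑ F' ∈ (Finset.univ.filter
        (fun F' : Finset α => CyclicFlat M ↑F' ∧ ZX ⊆ F')).filter (fun F' : Finset α => ¬ F' ⊂ X),
        ∑ Z ∈ (Finset.univ.filter
            (fun Z : Finset α => CyclicFlat M ↑Z ∧ e ∈ Z ∧ Z ⊂ X)).filter
            (fun Z : Finset α => (M.closure (↑Z ∪ ↑ZX)).toFinset = F'), dgamma M e Z ≤ 0 := by
      apply Finset.sum_nonpos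
      intro F' hF'
      simp only [Finset.mem_filter, Finset.mem_univ, true_and] at hF'
      apply Finset.sum_nonpos
      intro Z hZ
      simp only [Finset.mem_filter, Finset.mem_univ, true_and] at hZ
      obtain ⟨⟨hZcf, heZ, hZX⟩, hfib⟩ := hZ
      by_contra hpos
      push_neg at hpos
      have hcl := hjoin Z ZX hZcf hZXcf hZX hZXss hpos hZXpos
      apply hF'.2
      rw [← hfib]
      exact Finset.coe_ssubset.1 (by rw [Set.coe_toFinset]; exact hcl)
    rw [hdec] at hstar
    linarith
  · rintro W hW heW hjoin
    have hstar := star' he hW heW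
    by_cases hneg : ∃ x ∈ Finset.univ.filter
        (fun Z : Finset α => CyclicFlat M ↑Z ∧ e ∈ Z ∧ Z ⊂ W), dgamma M e x < 0
    · obtain ⟨x, hxQ, hxneg⟩ := hneg
      simp only [Finset.mem_filter, Finset.mem_univ, true_and] at hxQ
      obtain ⟨hxcf, hex, hxW⟩ := hxQ
      have hdec := sum_Q_decomp he hxcf hex hxW
      have hbound : (0 : ℤ) ≤ ∑ F' ∈ (Finset.univ.filter
          (fun F' : Finset α => CyclicFlat M ↑F' ∧ x ⊆ F')).filter (fun F' : Finset α => ¬ F' ⊂ W),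
          ∑ Z ∈ (Finset.univ.filter
              (fun Z : Finset α => CyclicFlat M ↑Z ∧ e ∈ Z ∧ Z ⊂ W)).filter
              (fun Z : Finset α => (M.closure (↑Z ∪ ↑x)).toFinset = F'), dgamma M e Z := by
        apply Finset.sum_nonneg
        intro F' hF'
        simp only [Finset.mem_filter, Finset.mem_univ, true_and] at hF'
        apply Finset.sum_nonneg
        intro Z hZ
        simp only [Finset.mem_filter, Finset.mem_univ, true_and] at hZ
        obtain ⟨⟨hZcf, heZ, hZW⟩, hfib⟩ := hZ
        by_contra hneg'
        push_neg at hneg'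
        have hcl := hjoin Z x hZcf hxcf hZW hxW (by linarith) hxneg
        apply hF'.2
        rw [← hfib]
        exact Finset.coe_ssubset.1 (by rw [Set.coe_toFinset]; exact hcl)
      rw [hdec] at hstar
      linarith
    · push_neg at hneg
      have hsum : (0 : ℤ) ≤ ∑ Z ∈ Finset.univ.filter
          (fun Z : Finset α => CyclicFlat M ↑Z ∧ e ∈ Z ∧ Z ⊂ W), dgamma M e Z :=
        Finset.sum_nonneg (fun Z hZ => not_lt.1 (by exact fun h => absurd h (not_lt.2 (hneg Z hZ))))
      linarith


end Paper
end

section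
/- For every matroid M on a finite ground set E(M) and every X ⊆ E(M), γ_M(X) = β_{M*}(E(M) ∖ X), where M* is the dual matroid of M. -/
open Set Matroid
open scoped Classical

namespace Paper

variable {α : Type*}

variable [Fintype α] [DecidableEq α]

/-- The `β` function: `β_N(X) = r(E(N)) − r(X) − Σ_{Z ∈ Z(N), X ⊊ Z} β_N(Z)`. -/
noncomputable def beta (M : Matroid α) (X : Finset α) : ℤ :=
  (rk M M.E : ℤ) - rk M ↑X -
    ∑ Z ∈ (Finset.univ.filter (fun Z : Finset α => CyclicFlat M ↑Z ∧ X ⊂ Z)).attach,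
      beta M Z.1
termination_by Fintype.card α - X.card
decreasing_by
  have h1 : X.card < Z.1.card := Finset.card_lt_card (Finset.mem_filter.mp Z.2).2.2
  have h2 : Z.1.card ≤ Fintype.card α := Finset.card_le_univ _
  omega

set_option linter.unusedSectionVars false
section Aux

variable [Fintype α] [DecidableEq α]

lemma ncard_cast (s : Set α) : ((s.ncard : ℕ∞)) = s.encard :=
  (Set.toFinite s).cast_ncard_eq

lemma ncard_diff_add {s t : Set α} (h : s ⊆ t) :
    (t \ s).ncard + s.ncard = t.ncard := by
  have h1 := Set.encard_diff_add_encard_of_subset h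
  rw [← ncard_cast, ← ncard_cast, ← ncard_cast, ← Nat.cast_add] at h1
  exact_mod_cast h1

lemma ncard_union_add_inter (s t : Set α) :
    (s ∪ t).ncard + (s ∩ t).ncard = s.ncard + t.ncard := by
  have h1 := Set.encard_union_add_encard_inter s t
  rw [← ncard_cast, ← ncard_cast, ← ncard_cast, ← ncard_cast, ← Nat.cast_add,
    ← Nat.cast_add] at h1
  exact_mod_cast h1

lemma le_rk {M : Matroid α} {I X : Set α} (hI : M.Indep I) (hIX : I ⊆ X) :
    I.ncard ≤ rk M X := by
  refine le_csSup ⟨Fintype.card α, ?_⟩ ⟨I, ⟨hI, hIX⟩, rfl⟩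
  rintro n ⟨J, _, rfl⟩
  calc J.ncard ≤ (Set.univ : Set α).ncard := Set.ncard_le_ncard (Set.subset_univ J)
    _ = Fintype.card α := by rw [Set.ncard_univ, Nat.card_eq_fintype_card]

lemma rk_le {M : Matroid α} {X : Set α} {n : ℕ}
    (h : ∀ I, M.Indep I → I ⊆ X → I.ncard ≤ n) : rk M X ≤ n := by
  refine csSup_le ⟨0, ∅, ⟨M.empty_indep, Set.empty_subset X⟩, by simp⟩ ?_
  rintro m ⟨I, ⟨hI, hIX⟩, rfl⟩
  exact h I hI hIX

lemma basis'_rk_eq {M : Matroid α} {I X : Set α} (h : M.IsBasis' I X) :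
    rk M X = I.ncard := by
  refine le_antisymm (rk_le fun J hJ hJX => ?_) (le_rk h.indep h.subset)
  by_contra hlt
  push_neg at hlt
  have hcard : I.encard < J.encard := by
    rw [← ncard_cast, ← ncard_cast]; exact_mod_cast hlt
  obtain ⟨e, he, hins⟩ := h.indep.augment hJ hcard
  exact h.insert_not_indep ⟨hJX he.1, he.2⟩ hins

lemma basis_rk_eq {M : Matroid α} {I X : Set α} (h : M.IsBasis I X) :
    rk M X = I.ncard := basis'_rk_eq h.isBasis'

lemma rk_empty (M : Matroid α) : rk M (∅ : Set α) = 0 := by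
  rw [basis_rk_eq (Indep.isBasis_self M.empty_indep), Set.ncard_empty]

lemma base_ncard {M : Matroid α} {B : Set α} (hB : M.IsBase B) :
    B.ncard = rk M M.E := (basis_rk_eq hB.isBasis_ground).symm

lemma rk_mono (M : Matroid α) {X Y : Set α} (h : X ⊆ Y) : rk M X ≤ rk M Y :=
  rk_le fun I hI hIX => le_rk hI (hIX.trans h)

lemma rk_insert_le (M : Matroid α) (e : α) (X : Set α) :
    rk M (insert e X) ≤ rk M X + 1 := by
  refine rk_le fun I hI hIX => ?_
  have h1 : (I \ {e}).ncard ≤ rk M X := by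
    refine le_rk (hI.subset Set.diff_subset) fun y hy => ?_
    rcases hIX hy.1 with h | h
    · exact absurd h hy.2
    · exact h
  calc I.ncard ≤ (insert e (I \ {e})).ncard := Set.ncard_le_ncard
        (fun y hy => by by_cases hye : y = e <;> simp [hye, hy])
    _ ≤ (I \ {e}).ncard + 1 := Set.ncard_insert_le _ _
    _ ≤ rk M X + 1 := by omega

lemma mem_closure_iff_rk {M : Matroid α} {X : Set α} {e : α}
    (hX : X ⊆ M.E) (he : e ∈ M.E) :
    e ∈ M.closure X ↔ rk M (insert e X) = rk M X := by
  obtain ⟨I, hI⟩ := M.exists_isBasis X hX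
  constructor
  · intro hecl
    have hb : M.IsBasis I (insert e X) := by
      refine hI.indep.isBasis_of_subset_of_subset_closure
        (hI.subset.trans (Set.subset_insert _ _)) ?_
      refine Set.insert_subset ?_ hI.subset_closure
      rwa [hI.closure_eq_closure]
    rw [basis_rk_eq hb, basis_rk_eq hI]
  · intro hrk
    by_contra hecl
    have heX : e ∉ X := fun h => hecl (M.mem_closure_of_mem h hX)
    have heI : e ∉ I := fun h => heX (hI.subset h)
    have hind : M.Indep (insert e I) := by
      rw [hI.indep.insert_indep_iff_of_notMem heI]
      exact ⟨he, fun h => hecl (by rwa [hI.closure_eq_closure] at h)⟩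
    have h1 : I.ncard + 1 ≤ rk M (insert e X) := by
      have := le_rk hind (Set.insert_subset_insert hI.subset)
      rwa [Set.ncard_insert_of_notMem heI] at this
    rw [hrk, basis_rk_eq hI] at h1
    omega

lemma dep_has_circuit_aux (M : Matroid α) :
    ∀ (n : ℕ) (D : Set α), D.ncard ≤ n → M.Dep D → ∃ C, C ⊆ D ∧ Circuit M C := by
  intro n
  induction n with
  | zero =>
    intro D hcard hD
    have := (Set.ncard_pos (Set.toFinite D)).mpr hD.nonempty
    omega
  | succ n ih =>
    intro D hcard hD
    by_cases h : ∃ D', D' ⊂ D ∧ M.Dep D'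
    · obtain ⟨D', hsub, hdep⟩ := h
      have hlt : D'.ncard < D.ncard := Set.ncard_lt_ncard hsub (Set.toFinite D)
      obtain ⟨C, hCD, hC⟩ := ih D' (by omega) hdep
      exact ⟨C, hCD.trans hsub.subset, hC⟩
    · push_neg at h
      refine ⟨D, Set.Subset.rfl, hD, fun D' hD' => ?_⟩
      exact indep_of_not_dep (h D' hD') ((hD'.subset).trans hD.subset_ground)

lemma dep_has_circuit (M : Matroid α) (D : Set α) (hD : M.Dep D) :
    ∃ C, C ⊆ D ∧ Circuit M C :=
  dep_has_circuit_aux M D.ncard D le_rfl hD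

lemma mem_circuit_iff {M : Matroid α} {X : Set α} {x : α}
    (hX : X ⊆ M.E) (hx : x ∈ X) :
    (∃ C, Circuit M C ∧ C ⊆ X ∧ x ∈ C) ↔ x ∈ M.closure (X \ {x}) := by
  constructor
  · rintro ⟨C, hC, hCX, hxC⟩
    have hCd : M.Indep (C \ {x}) :=
      hC.2 _ ⟨Set.diff_subset, fun hsub => (hsub hxC).2 rfl⟩
    have hxcl : x ∈ M.closure (C \ {x}) := by
      rw [hCd.mem_closure_iff]
      left
      rw [Set.insert_diff_singleton, Set.insert_eq_of_mem hxC]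
      exact hC.1
    exact M.closure_subset_closure (Set.diff_subset_diff_left hCX) hxcl
  · intro hx'
    obtain ⟨I, hI⟩ := M.exists_isBasis (X \ {x}) (Set.diff_subset.trans hX)
    have hxI : x ∉ I := fun h => (hI.subset h).2 rfl
    have hxclI : x ∈ M.closure I := by
      rwa [hI.closure_eq_closure]
    have hdep : M.Dep (insert x I) :=
      (hI.indep.mem_closure_iff_of_notMem hxI).mp hxclI
    obtain ⟨C, hCsub, hC⟩ := dep_has_circuit M _ hdep
    refine ⟨C, hC, hCsub.trans
      (Set.insert_subset hx (hI.subset.trans Set.diff_subset)), ?_⟩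
    by_contra hxC
    have hCI : C ⊆ I := fun y hy => by
      rcases hCsub hy with h | h
      · exact absurd (h ▸ hy) hxC
      · exact h
    exact (hI.indep.subset hCI).not_dep hC.1

lemma cyclic_iff_rk {M : Matroid α} {X : Set α} (hX : X ⊆ M.E) :
    Cyclic M X ↔ ∀ x ∈ X, rk M (X \ {x}) = rk M X := by
  constructor
  · rintro ⟨-, h⟩ x hx
    have h1 := (mem_circuit_iff hX hx).mp (h x hx)
    have h2 := (mem_closure_iff_rk (Set.diff_subset.trans hX) (hX hx)).mp h1
    rwa [Set.insert_diff_singleton, Set.insert_eq_of_mem hx, eq_comm] at h2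
  · intro h
    refine ⟨hX, fun x hx => (mem_circuit_iff hX hx).mpr ?_⟩
    rw [mem_closure_iff_rk (Set.diff_subset.trans hX) (hX hx),
      Set.insert_diff_singleton, Set.insert_eq_of_mem hx]
    exact (h x hx).symm

lemma flat_of_closure_subset {M : Matroid α} {X : Set α}
    (hX : X ⊆ M.E) (h : M.closure X ⊆ X) : M.IsFlat X := by
  refine ⟨fun I Y hI hIY => ?_, hX⟩
  have h1 : Y ⊆ M.closure I := hIY.subset_closure
  rw [hI.closure_eq_closure] at h1
  exact h1.trans h

lemma flat_iff_rk {M : Matroid α} {X : Set α} (hX : X ⊆ M.E) :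
    M.IsFlat X ↔ ∀ e ∈ M.E, e ∉ X → rk M (insert e X) = rk M X + 1 := by
  constructor
  · intro h e heE heX
    have hecl : e ∉ M.closure X := fun hc => heX (h.closure ▸ hc)
    have h1 : rk M (insert e X) ≠ rk M X :=
      fun hh => hecl ((mem_closure_iff_rk hX heE).mpr hh)
    have h2 := rk_insert_le M e X
    have h3 := rk_mono M (Set.subset_insert e X)
    omega
  · intro h
    refine flat_of_closure_subset hX fun y hy => ?_
    have hyE : y ∈ M.E := M.closure_subset_ground X hy
    by_contra hyX
    have h1 := h y hyE hyX
    have h2 := (mem_closure_iff_rk hX hyE).mp hy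
    omega

lemma rk_compl_dual (M : Matroid α) {X : Set α} (hX : X ⊆ M.E) :
    rk M✶ (M.E \ X) + rk M M.E = (M.E \ X).ncard + rk M X := by
  obtain ⟨I, hI⟩ := M.exists_isBasis X hX
  obtain ⟨B, hB, hIB⟩ := hI.exists_isBase
  have hBE : B ⊆ M.E := hB.subset_ground
  have hJind : M✶.Indep ((M.E \ X) \ B) := by
    rw [dual_indep_iff_exists']
    exact ⟨Set.diff_subset.trans Set.diff_subset, B, hB, Set.disjoint_sdiff_left⟩
  have hJle : ((M.E \ X) \ B).ncard ≤ rk M✶ (M.E \ X) :=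
    le_rk hJind Set.diff_subset
  have e1 : ((M.E \ X) \ B).ncard + (X ∪ B).ncard = M.E.ncard := by
    rw [Set.diff_diff]
    exact ncard_diff_add (Set.union_subset hX hBE)
  have e2 : (X ∪ B).ncard + (X ∩ B).ncard = X.ncard + B.ncard :=
    ncard_union_add_inter X B
  have e3 : (X ∩ B).ncard = rk M X := by
    rw [basis_rk_eq hI, hIB, Set.inter_comm]
  have e4 : B.ncard = rk M M.E := base_ncard hB
  have e5 : (M.E \ X).ncard + X.ncard = M.E.ncard := ncard_diff_add hX
  have hub : rk M✶ (M.E \ X) ≤ (M.E \ X).ncard + rk M X - rk M M.E := by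
    refine rk_le fun K hK hKX => ?_
    obtain ⟨hKE, B₂, hB₂, hdisj⟩ := dual_indep_iff_exists'.mp hK
    have h1 : K ⊆ (M.E \ X) \ (B₂ \ X) := fun y hy =>
      ⟨hKX hy, fun hyB => (Set.disjoint_left.mp hdisj hy) hyB.1⟩
    have h2 : K.ncard ≤ ((M.E \ X) \ (B₂ \ X)).ncard :=
      Set.ncard_le_ncard h1 (Set.toFinite _)
    have h3 : ((M.E \ X) \ (B₂ \ X)).ncard + (B₂ \ X).ncard = (M.E \ X).ncard :=
      ncard_diff_add (Set.diff_subset_diff_left hB₂.subset_ground)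
    have h4 : (B₂ \ X).ncard + (B₂ ∩ X).ncard = B₂.ncard := by
      have := ncard_diff_add (Set.inter_subset_left : B₂ ∩ X ⊆ B₂)
      rwa [Set.diff_self_inter] at this
    have h5 : (B₂ ∩ X).ncard ≤ rk M X :=
      le_rk (hB₂.indep.inter_right X) Set.inter_subset_right
    have h6 : B₂.ncard = rk M M.E := base_ncard hB₂
    omega
  omega

lemma flat_iff_cyclic_compl (M : Matroid α) {X : Set α} (hX : X ⊆ M.E) :
    M.IsFlat X ↔ Cyclic M✶ (M.E \ X) := by
  rw [flat_iff_rk hX,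
    cyclic_iff_rk (M := M✶) (X := M.E \ X)
      (by rw [dual_ground]; exact Set.diff_subset)]
  have key : ∀ e ∈ M.E \ X,
      (rk M✶ ((M.E \ X) \ {e}) = rk M✶ (M.E \ X) ↔
        rk M (insert e X) = rk M X + 1) := by
    rintro e ⟨heE, heX⟩
    have hins : insert e X ⊆ M.E := Set.insert_subset heE hX
    have hd1 := rk_compl_dual M hX
    have hd2 := rk_compl_dual M hins
    have hrew : (M.E \ X) \ {e} = M.E \ insert e X := by
      rw [Set.diff_diff, Set.union_singleton]
    have hcard : (M.E \ insert e X).ncard + 1 = (M.E \ X).ncard := by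
      rw [← hrew]
      exact Set.ncard_diff_singleton_add_one ⟨heE, heX⟩ (Set.toFinite _)
    rw [hrew]
    omega
  constructor
  · rintro h x hx
    exact (key x hx).mpr (h x hx.1 hx.2)
  · intro h e heE heX
    exact (key e ⟨heE, heX⟩).mp (h e ⟨heE, heX⟩)

lemma cyclicFlat_dual (M : Matroid α) {Z : Set α} (hZ : Z ⊆ M.E) :
    CyclicFlat M Z ↔ CyclicFlat M✶ (M.E \ Z) := by
  have h1 : M.IsFlat Z ↔ Cyclic M✶ (M.E \ Z) := flat_iff_cyclic_compl M hZ
  have h2 : M✶.IsFlat (M.E \ Z) ↔ Cyclic M Z := by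
    have h := flat_iff_cyclic_compl M✶ (X := M.E \ Z)
      (by rw [dual_ground]; exact Set.diff_subset)
    rwa [dual_dual, dual_ground, Set.diff_diff_cancel_left hZ] at h
  unfold CyclicFlat
  rw [h1, ← h2]
  tauto

lemma sdiff_ssubset_helper {E X Z : Finset α} (hZ : Z ⊆ E) (hX : X ⊆ E)
    (h : Z ⊂ X) : E \ X ⊂ E \ Z := by
  refine ⟨Finset.sdiff_subset_sdiff (le_refl E) h.1, fun hc => ?_⟩
  have h2 : X ⊆ Z := by
    have := Finset.sdiff_subset_sdiff (le_refl E) hc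
    rwa [Finset.sdiff_sdiff_eq_self hX, Finset.sdiff_sdiff_eq_self hZ] at this
  exact h.2 h2

end Aux

lemma gamma_eq_beta (M : Matroid α) (E : Finset α) (hE : ↑E = M.E) :
    ∀ X : Finset α, X ⊆ E → gamma M X = beta M✶ (E \ X) := by
  intro X
  induction X using Finset.strongInductionOn with
  | _ X ih =>
  intro hX
  have hXE : (↑X : Set α) ⊆ M.E := hE ▸ Finset.coe_subset.mpr hX
  have hco : (↑(E \ X) : Set α) = M.E \ ↑X := by rw [Finset.coe_sdiff, hE]
  have hnull : nullity M ↑X = (rk M✶ M✶.E : ℤ) - (rk M✶ ↑(E \ X) : ℤ) := by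
    have h1 := rk_compl_dual M hXE
    have h2 := rk_compl_dual M (X := (∅ : Set α)) (Set.empty_subset _)
    rw [Set.diff_empty, rk_empty] at h2
    have h4 : (M.E \ ↑X).ncard + (↑X : Set α).ncard = M.E.ncard := ncard_diff_add hXE
    unfold nullity
    rw [hco]
    have h5 : M✶.E = M.E := rfl
    rw [h5]
    omega
  rw [gamma, beta, hnull]
  congr 1
  rw [Finset.sum_attach _ (gamma M), Finset.sum_attach _ (beta M✶)]
  refine Finset.sum_nbij' (i := fun Z => E \ Z) (j := fun W => E \ W) ?_ ?_ ?_ ?_ ?_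
  · intro Z hZ
    rw [Finset.mem_filter] at hZ ⊢
    obtain ⟨-, hcf, hZX⟩ := hZ
    have hZEs : (↑Z : Set α) ⊆ M.E := hcf.1.1
    have hZE : Z ⊆ E := by
      rw [← hE] at hZEs; exact_mod_cast hZEs
    refine ⟨Finset.mem_univ _, ?_, sdiff_ssubset_helper hZE hX hZX⟩
    have h := (cyclicFlat_dual M (Z := (↑Z : Set α)) hcf.1.1).mp hcf
    rwa [← hE, ← Finset.coe_sdiff] at h
  · intro W hW
    rw [Finset.mem_filter] at hW ⊢
    obtain ⟨-, hcf, hWX⟩ := hW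
    have hWEs : (↑W : Set α) ⊆ M.E := hcf.1.1
    have hWE : W ⊆ E := by rw [← hE] at hWEs; exact_mod_cast hWEs
    refine ⟨Finset.mem_univ _, ?_, ?_⟩
    · have hsub : (↑(E \ W) : Set α) ⊆ M.E := by
        rw [Finset.coe_sdiff, hE]; exact Set.diff_subset
      rw [cyclicFlat_dual M hsub]
      have hrw : M.E \ ↑(E \ W) = (↑W : Set α) := by
        rw [Finset.coe_sdiff, hE, Set.diff_diff_cancel_left hWEs]
      rwa [hrw]
    · have h := sdiff_ssubset_helper (Finset.sdiff_subset : E \ X ⊆ E) hWE hWX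
      rwa [Finset.sdiff_sdiff_eq_self hX] at h
  · intro Z hZ
    rw [Finset.mem_filter] at hZ
    have hZEs : (↑Z : Set α) ⊆ M.E := hZ.2.1.1.1
    have hZE : Z ⊆ E := by rw [← hE] at hZEs; exact_mod_cast hZEs
    exact Finset.sdiff_sdiff_eq_self hZE
  · intro W hW
    rw [Finset.mem_filter] at hW
    have hWEs : (↑W : Set α) ⊆ M.E := hW.2.1.1.1
    have hWE : W ⊆ E := by rw [← hE] at hWEs; exact_mod_cast hWEs
    exact Finset.sdiff_sdiff_eq_self hWE
  · intro Z hZ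
    rw [Finset.mem_filter] at hZ
    have hZEs : (↑Z : Set α) ⊆ M.E := hZ.2.1.1.1
    have hZE : Z ⊆ E := by rw [← hE] at hZEs; exact_mod_cast hZEs
    exact ih Z hZ.2.2 hZE

theorem statement_19 (M : Matroid α) (E : Finset α) (hE : ↑E = M.E)
    (X : Finset α) (hX : X ⊆ E) :
    gamma M X = beta M✶ (E \ X) :=
  gamma_eq_beta M E hE X hX

end Paper
end
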